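/- Let A₁ ∈ ℝ^{n₁×n₁}, A₂ ∈ ℝ^{n₂×n₂}, B₁ ∈ ℝ^{n₁×m}, B₂ ∈ ℝ^{n₂×m}, C₁ ∈ ℝ^{p×n₁}, C₂ ∈ ℝ^{p×n₂}, K₁ ∈ ℝ^{n₂×n₁}, K₂ ∈ ℝ^{n₁×n₂}. Suppose there exist constants α, β > 0 such that ‖e^{A_D t}‖ ≤ β e^{−α t} for all t ≥ 0, where A_D = blockdiag(A₁, A₂) and ‖·‖ denotes the operator norm, and suppose max(‖K₁‖, ‖K₂‖) < √(2α)/β. Then for each q ∈ {1,2} the series Σ_{k=1}^∞ P_q^{(k)} of level-k reachability Gramians and the series Σ_{k=1}^∞ Q_q^{(k)} of level-k observability Gramians converge; that is, the infinite reachability and observability Gramians of both modes exist. -/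

import Mathlib

open Matrix MeasureTheory

/-- The Euclidean (`ℓ²`) operator norm of a real matrix. -/
noncomputable def opNorm {a b : Type*} [Fintype a] [Fintype b] [DecidableEq b]
    (M : Matrix a b ℝ) : ℝ :=
  ‖LinearMap.toContinuousLinearMap (Matrix.toEuclideanLin M)‖

/-- The pair of level-`(k+1)` reachability energy functionals for the two-mode switched
system: the first component is the functional for the alternating mode sequence starting
in mode 1, the second the one starting in mode 2.  Here `K1 : ℝ^{n₂×n₁}` couples mode 1 to
mode 2 and `K2 : ℝ^{n₁×n₂}` couples mode 2 to mode 1, so that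
`g^r_{q₁,…,q_k}(t₁,…,t_k) = e^{A_{q₁}t₁} K_{q₂→q₁} e^{A_{q₂}t₂} ⋯ e^{A_{q_k}t_k} B_{q_k}`. -/
noncomputable def reachFun {n1 n2 m : ℕ}
    (A1 : Matrix (Fin n1) (Fin n1) ℝ) (A2 : Matrix (Fin n2) (Fin n2) ℝ)
    (B1 : Matrix (Fin n1) (Fin m) ℝ) (B2 : Matrix (Fin n2) (Fin m) ℝ)
    (K1 : Matrix (Fin n2) (Fin n1) ℝ) (K2 : Matrix (Fin n1) (Fin n2) ℝ) :
    (k : ℕ) → ((Fin (k + 1) → ℝ) → Matrix (Fin n1) (Fin m) ℝ) ×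
      ((Fin (k + 1) → ℝ) → Matrix (Fin n2) (Fin m) ℝ)
  | 0 => (fun t => NormedSpace.exp (t 0 • A1) * B1,
          fun t => NormedSpace.exp (t 0 • A2) * B2)
  | k + 1 =>
      (fun t => NormedSpace.exp (t 0 • A1) * K2 *
        (reachFun A1 A2 B1 B2 K1 K2 k).2 (fun i => t i.succ),
       fun t => NormedSpace.exp (t 0 • A2) * K1 *
        (reachFun A1 A2 B1 B2 K1 K2 k).1 (fun i => t i.succ))

/-- The level-`(k+1)` reachability Gramian of mode 1, defined entrywise as the iterated
integral of `g^r (g^r)ᵀ` over `[0,∞)^{k+1}`. -/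
noncomputable def reachGram1 {n1 n2 m : ℕ}
    (A1 : Matrix (Fin n1) (Fin n1) ℝ) (A2 : Matrix (Fin n2) (Fin n2) ℝ)
    (B1 : Matrix (Fin n1) (Fin m) ℝ) (B2 : Matrix (Fin n2) (Fin m) ℝ)
    (K1 : Matrix (Fin n2) (Fin n1) ℝ) (K2 : Matrix (Fin n1) (Fin n2) ℝ) (k : ℕ) :
    Matrix (Fin n1) (Fin n1) ℝ :=
  Matrix.of fun i j =>
    ∫ t in Set.univ.pi (fun _ : Fin (k + 1) => Set.Ioi (0:ℝ)),
      ((reachFun A1 A2 B1 B2 K1 K2 k).1 t * ((reachFun A1 A2 B1 B2 K1 K2 k).1 t)ᵀ) i j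

/-- The level-`(k+1)` reachability Gramian of mode 2. -/
noncomputable def reachGram2 {n1 n2 m : ℕ}
    (A1 : Matrix (Fin n1) (Fin n1) ℝ) (A2 : Matrix (Fin n2) (Fin n2) ℝ)
    (B1 : Matrix (Fin n1) (Fin m) ℝ) (B2 : Matrix (Fin n2) (Fin m) ℝ)
    (K1 : Matrix (Fin n2) (Fin n1) ℝ) (K2 : Matrix (Fin n1) (Fin n2) ℝ) (k : ℕ) :
    Matrix (Fin n2) (Fin n2) ℝ :=
  Matrix.of fun i j =>
    ∫ t in Set.univ.pi (fun _ : Fin (k + 1) => Set.Ioi (0:ℝ)),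
      ((reachFun A1 A2 B1 B2 K1 K2 k).2 t * ((reachFun A1 A2 B1 B2 K1 K2 k).2 t)ᵀ) i j

/-- The pair of level-`(k+1)` observability energy functionals for the two-mode switched
system: the first component is the functional for the alternating mode sequence *ending*
in mode 1, the second for the one ending in mode 2.  Here `K1 : ℝ^{n₂×n₁}` couples mode 1
to mode 2 and `K2 : ℝ^{n₁×n₂}` couples mode 2 to mode 1, and
`g^o(t_k,…,t₁) = C_{q_k} e^{A_{q_k}t_k} K_{q_k←q_{k−1}} ⋯ K_{q₂←q₁} e^{A_{q₁}t₁}`;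
the argument `t 0` is the *last* time variable `t₁`. -/
noncomputable def obsFun {n1 n2 p : ℕ}
    (A1 : Matrix (Fin n1) (Fin n1) ℝ) (A2 : Matrix (Fin n2) (Fin n2) ℝ)
    (C1 : Matrix (Fin p) (Fin n1) ℝ) (C2 : Matrix (Fin p) (Fin n2) ℝ)
    (K1 : Matrix (Fin n2) (Fin n1) ℝ) (K2 : Matrix (Fin n1) (Fin n2) ℝ) :
    (k : ℕ) → ((Fin (k + 1) → ℝ) → Matrix (Fin p) (Fin n1) ℝ) ×
      ((Fin (k + 1) → ℝ) → Matrix (Fin p) (Fin n2) ℝ)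
  | 0 => (fun t => C1 * NormedSpace.exp (t 0 • A1),
          fun t => C2 * NormedSpace.exp (t 0 • A2))
  | k + 1 =>
      (fun t => (obsFun A1 A2 C1 C2 K1 K2 k).2 (fun i => t i.succ) * K1 *
        NormedSpace.exp (t 0 • A1),
       fun t => (obsFun A1 A2 C1 C2 K1 K2 k).1 (fun i => t i.succ) * K2 *
        NormedSpace.exp (t 0 • A2))

/-- The level-`(k+1)` observability Gramian of mode 1, defined entrywise as the iterated
integral of `(g^o)ᵀ g^o` over `[0,∞)^{k+1}`. -/
noncomputable def obsGram1 {n1 n2 p : ℕ}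
    (A1 : Matrix (Fin n1) (Fin n1) ℝ) (A2 : Matrix (Fin n2) (Fin n2) ℝ)
    (C1 : Matrix (Fin p) (Fin n1) ℝ) (C2 : Matrix (Fin p) (Fin n2) ℝ)
    (K1 : Matrix (Fin n2) (Fin n1) ℝ) (K2 : Matrix (Fin n1) (Fin n2) ℝ) (k : ℕ) :
    Matrix (Fin n1) (Fin n1) ℝ :=
  Matrix.of fun i j =>
    ∫ t in Set.univ.pi (fun _ : Fin (k + 1) => Set.Ioi (0:ℝ)),
      (((obsFun A1 A2 C1 C2 K1 K2 k).1 t)ᵀ * (obsFun A1 A2 C1 C2 K1 K2 k).1 t) i j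

/-- The level-`(k+1)` observability Gramian of mode 2. -/
noncomputable def obsGram2 {n1 n2 p : ℕ}
    (A1 : Matrix (Fin n1) (Fin n1) ℝ) (A2 : Matrix (Fin n2) (Fin n2) ℝ)
    (C1 : Matrix (Fin p) (Fin n1) ℝ) (C2 : Matrix (Fin p) (Fin n2) ℝ)
    (K1 : Matrix (Fin n2) (Fin n1) ℝ) (K2 : Matrix (Fin n1) (Fin n2) ℝ) (k : ℕ) :
    Matrix (Fin n2) (Fin n2) ℝ :=
  Matrix.of fun i j =>
    ∫ t in Set.univ.pi (fun _ : Fin (k + 1) => Set.Ioi (0:ℝ)),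
      (((obsFun A1 A2 C1 C2 K1 K2 k).2 t)ᵀ * (obsFun A1 A2 C1 C2 K1 K2 k).2 t) i j

namespace Aux

noncomputable def enorm {a : Type*} [Fintype a] (x : a → ℝ) : ℝ :=
  ‖((WithLp.equiv 2 (a → ℝ)).symm x : EuclideanSpace ℝ a)‖

lemma enorm_eq {a : Type*} [Fintype a] (x : a → ℝ) :
    enorm x = Real.sqrt (∑ i, (x i) ^ 2) := by
  rw [enorm, EuclideanSpace.norm_eq]
  simp [sq_abs]

lemma enorm_nonneg {a : Type*} [Fintype a] (x : a → ℝ) : 0 ≤ enorm x := norm_nonneg _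

lemma abs_le_enorm {a : Type*} [Fintype a] (x : a → ℝ) (i : a) : |x i| ≤ enorm x := by
  rw [enorm_eq, ← Real.sqrt_sq_eq_abs]
  exact Real.sqrt_le_sqrt (Finset.single_le_sum (f := fun j => (x j) ^ 2)
    (fun j _ => sq_nonneg _) (Finset.mem_univ i))

lemma mulVec_enorm_le {a b : Type*} [Fintype a] [Fintype b] [DecidableEq b]
    (M : Matrix a b ℝ) (x : b → ℝ) : enorm (M *ᵥ x) ≤ opNorm M * enorm x := by
  have h := (LinearMap.toContinuousLinearMap (Matrix.toEuclideanLin M)).le_opNorm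
    ((WithLp.equiv 2 (b → ℝ)).symm x)
  simpa [opNorm, enorm, LinearMap.coe_toContinuousLinearMap'] using h

lemma opNorm_nonneg {a b : Type*} [Fintype a] [Fintype b] [DecidableEq b]
    (M : Matrix a b ℝ) : 0 ≤ opNorm M := norm_nonneg _

lemma opNorm_le_of_bound {a b : Type*} [Fintype a] [Fintype b] [DecidableEq b]
    (M : Matrix a b ℝ) {c : ℝ} (hc : 0 ≤ c)
    (h : ∀ x : b → ℝ, enorm (M *ᵥ x) ≤ c * enorm x) : opNorm M ≤ c := by
  refine ContinuousLinearMap.opNorm_le_bound _ hc fun y => ?_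
  have h2 := h ((WithLp.equiv 2 (b → ℝ)) y)
  simpa [enorm, LinearMap.coe_toContinuousLinearMap', Matrix.toEuclideanLin_apply] using h2

lemma opNorm_entry_le {a b : Type*} [Fintype a] [Fintype b] [DecidableEq b]
    (M : Matrix a b ℝ) (i : a) (j : b) : |M i j| ≤ opNorm M := by
  have h1 : M *ᵥ Pi.single j (1:ℝ) = fun i => M i j := by simp; rfl
  have h2 := abs_le_enorm (M *ᵥ Pi.single j (1:ℝ)) i
  rw [h1] at h2
  have h3 := mulVec_enorm_le M (Pi.single j (1:ℝ))
  rw [h1] at h3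
  have h4 : enorm (Pi.single j (1 : ℝ)) = 1 := by
    rw [enorm_eq]
    have : (∑ i, ((Pi.single j (1:ℝ) : b → ℝ) i) ^ 2) = 1 := by
      rw [Finset.sum_eq_single j]
      · simp
      · intro i _ hij; simp [Pi.single_apply, hij]
      · intro hj; exact absurd (Finset.mem_univ j) hj
    rw [this, Real.sqrt_one]
  rw [h4, mul_one] at h3
  exact h2.trans h3

lemma opNorm_mul_le {a b c : Type*} [Fintype a] [Fintype b] [DecidableEq b]
    [Fintype c] [DecidableEq c] (M : Matrix a b ℝ) (N : Matrix b c ℝ) :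
    opNorm (M * N) ≤ opNorm M * opNorm N := by
  refine opNorm_le_of_bound _ (mul_nonneg (opNorm_nonneg M) (opNorm_nonneg N)) fun x => ?_
  rw [← Matrix.mulVec_mulVec]
  calc enorm (M *ᵥ (N *ᵥ x)) ≤ opNorm M * enorm (N *ᵥ x) := mulVec_enorm_le M _
    _ ≤ opNorm M * (opNorm N * enorm x) :=
        mul_le_mul_of_nonneg_left (mulVec_enorm_le N x) (opNorm_nonneg M)
    _ = opNorm M * opNorm N * enorm x := by ring

lemma enorm_sumElim {a b : Type*} [Fintype a] [Fintype b] (u : a → ℝ) (v : b → ℝ) :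
    enorm (Sum.elim u v) = Real.sqrt ((∑ i, (u i) ^ 2) + ∑ i, (v i) ^ 2) := by
  rw [enorm_eq, Fintype.sum_sum_type]
  simp

lemma opNorm_fromBlocks_left {a b a' b' : Type*} [Fintype a] [Fintype b]
    [Fintype a'] [Fintype b'] [DecidableEq a'] [DecidableEq b']
    (A : Matrix a a' ℝ) (B : Matrix a b' ℝ) (C : Matrix b a' ℝ) (D : Matrix b b' ℝ) :
    opNorm A ≤ opNorm (Matrix.fromBlocks A B C D) := by
  refine opNorm_le_of_bound _ (opNorm_nonneg _) fun x => ?_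
  have h := mulVec_enorm_le (Matrix.fromBlocks A B C D) (Sum.elim x 0)
  have key : (Matrix.fromBlocks A B C D) *ᵥ (Sum.elim x 0) = Sum.elim (A *ᵥ x) (C *ᵥ x) := by
    rw [Matrix.fromBlocks_mulVec]
    simp [Sum.elim_comp_inl, Sum.elim_comp_inr]
  rw [key] at h
  have hx : enorm (Sum.elim x (0 : b' → ℝ)) = enorm x := by
    rw [enorm_sumElim, enorm_eq]; simp
  have hle : enorm (A *ᵥ x) ≤ enorm (Sum.elim (A *ᵥ x) (C *ᵥ x)) := by
    rw [enorm_sumElim, enorm_eq]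
    exact Real.sqrt_le_sqrt (le_add_of_nonneg_right (Finset.sum_nonneg fun _ _ => sq_nonneg _))
  rw [hx] at h
  exact hle.trans h

lemma opNorm_fromBlocks_right {a b a' b' : Type*} [Fintype a] [Fintype b]
    [Fintype a'] [Fintype b'] [DecidableEq a'] [DecidableEq b']
    (A : Matrix a a' ℝ) (B : Matrix a b' ℝ) (C : Matrix b a' ℝ) (D : Matrix b b' ℝ) :
    opNorm D ≤ opNorm (Matrix.fromBlocks A B C D) := by
  refine opNorm_le_of_bound _ (opNorm_nonneg _) fun x => ?_
  have h := mulVec_enorm_le (Matrix.fromBlocks A B C D) (Sum.elim 0 x)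
  have key : (Matrix.fromBlocks A B C D) *ᵥ (Sum.elim 0 x) = Sum.elim (B *ᵥ x) (D *ᵥ x) := by
    rw [Matrix.fromBlocks_mulVec]
    simp [Sum.elim_comp_inl, Sum.elim_comp_inr]
  rw [key] at h
  have hx : enorm (Sum.elim (0 : a' → ℝ) x) = enorm x := by
    rw [enorm_sumElim, enorm_eq]; simp
  have hle : enorm (D *ᵥ x) ≤ enorm (Sum.elim (B *ᵥ x) (D *ᵥ x)) := by
    rw [enorm_sumElim, enorm_eq]
    exact Real.sqrt_le_sqrt (le_add_of_nonneg_left (Finset.sum_nonneg fun _ _ => sq_nonneg _))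
  rw [hx] at h
  exact hle.trans h

lemma exp_fromBlocks {n1 n2 : Type*} [Fintype n1] [DecidableEq n1] [Fintype n2] [DecidableEq n2]
    (M : Matrix n1 n1 ℝ) (N : Matrix n2 n2 ℝ) :
    NormedSpace.exp (Matrix.fromBlocks M 0 0 N) =
      Matrix.fromBlocks (NormedSpace.exp M) 0 0 (NormedSpace.exp N) := by
  letI : NormedRing (Matrix n1 n1 ℝ) := Matrix.linftyOpNormedRing
  letI : NormedAlgebra ℝ (Matrix n1 n1 ℝ) := Matrix.linftyOpNormedAlgebra
  letI : NormedRing (Matrix n2 n2 ℝ) := Matrix.linftyOpNormedRing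
  letI : NormedAlgebra ℝ (Matrix n2 n2 ℝ) := Matrix.linftyOpNormedAlgebra
  letI : NormedRing (Matrix (n1 ⊕ n2) (n1 ⊕ n2) ℝ) := Matrix.linftyOpNormedRing
  letI : NormedAlgebra ℝ (Matrix (n1 ⊕ n2) (n1 ⊕ n2) ℝ) := Matrix.linftyOpNormedAlgebra
  letI : NormedAlgebra ℚ (Matrix n1 n1 ℝ) := Matrix.linftyOpNormedAlgebra
  letI : NormedAlgebra ℚ (Matrix n2 n2 ℝ) := Matrix.linftyOpNormedAlgebra
  letI : NormedAlgebra ℚ (Matrix (n1 ⊕ n2) (n1 ⊕ n2) ℝ) := Matrix.linftyOpNormedAlgebra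
  let φ : Matrix n1 n1 ℝ × Matrix n2 n2 ℝ →+* Matrix (n1 ⊕ n2) (n1 ⊕ n2) ℝ :=
    { toFun := fun q => Matrix.fromBlocks q.1 0 0 q.2
      map_one' := Matrix.fromBlocks_one
      map_mul' := fun q r => by simp [Matrix.fromBlocks_multiply]
      map_zero' := Matrix.fromBlocks_zero
      map_add' := fun q r => by simp [Matrix.fromBlocks_add] }
  have hφ : Continuous φ :=
    Continuous.matrix_fromBlocks continuous_fst continuous_const continuous_const continuous_snd
  have h1 := NormedSpace.map_exp φ hφ (M, N)
  have h2 : NormedSpace.exp (M, N) = (NormedSpace.exp M, NormedSpace.exp N) :=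
    Prod.ext (Prod.fst_exp (M, N)) (Prod.snd_exp (M, N))
  calc NormedSpace.exp (Matrix.fromBlocks M 0 0 N) = NormedSpace.exp (φ (M, N)) := rfl
    _ = φ (NormedSpace.exp (M, N)) := h1.symm
    _ = φ (NormedSpace.exp M, NormedSpace.exp N) := by rw [h2]
    _ = Matrix.fromBlocks (NormedSpace.exp M) 0 0 (NormedSpace.exp N) := rfl

lemma continuous_exp_smul {n : Type*} [Fintype n] [DecidableEq n] (A : Matrix n n ℝ) :
    Continuous fun t : ℝ => NormedSpace.exp (t • A) := by
  letI : SeminormedRing (Matrix n n ℝ) := Matrix.linftyOpSemiNormedRing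
  letI : NormedRing (Matrix n n ℝ) := Matrix.linftyOpNormedRing
  letI : NormedAlgebra ℝ (Matrix n n ℝ) := Matrix.linftyOpNormedAlgebra
  letI : NormedAlgebra ℚ (Matrix n n ℝ) := Matrix.linftyOpNormedAlgebra
  exact NormedSpace.exp_continuous.comp (continuous_id.smul continuous_const)


lemma entry_bound_right {r c : Type*} [Fintype r] [Fintype c] [DecidableEq c]
    (M : Matrix r c ℝ) {C : ℝ} (hM : opNorm M ≤ C) (i j : r) :
    |(M * Mᵀ) i j| ≤ (Fintype.card c : ℝ) * C ^ 2 := by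
  have hC : 0 ≤ C := (opNorm_nonneg M).trans hM
  rw [Matrix.mul_apply]
  refine (Finset.abs_sum_le_sum_abs _ _).trans ?_
  calc ∑ l, |M i l * Mᵀ l j| ≤ ∑ _l : c, C * C := by
        refine Finset.sum_le_sum fun l _ => ?_
        rw [abs_mul, Matrix.transpose_apply]
        exact mul_le_mul ((opNorm_entry_le M i l).trans hM)
          ((opNorm_entry_le M j l).trans hM) (abs_nonneg _) hC
    _ = (Fintype.card c : ℝ) * C ^ 2 := by
        rw [Finset.sum_const, Finset.card_univ, nsmul_eq_mul]; ring

lemma entry_bound_left {r c : Type*} [Fintype r] [Fintype c] [DecidableEq c]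
    (M : Matrix r c ℝ) {C : ℝ} (hM : opNorm M ≤ C) (i j : c) :
    |(Mᵀ * M) i j| ≤ (Fintype.card r : ℝ) * C ^ 2 := by
  have hC : 0 ≤ C := (opNorm_nonneg M).trans hM
  rw [Matrix.mul_apply]
  refine (Finset.abs_sum_le_sum_abs _ _).trans ?_
  calc ∑ l, |Mᵀ i l * M l j| ≤ ∑ _l : r, C * C := by
        refine Finset.sum_le_sum fun l _ => ?_
        rw [abs_mul, Matrix.transpose_apply]
        exact mul_le_mul ((opNorm_entry_le M l i).trans hM)
          ((opNorm_entry_le M l j).trans hM) (abs_nonneg _) hC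
    _ = (Fintype.card r : ℝ) * C ^ 2 := by
        rw [Finset.sum_const, Finset.card_univ, nsmul_eq_mul]; ring

open MeasureTheory in
lemma scalar_int {N : ℕ} (F : (Fin N → ℝ) → ℝ) (hF : Continuous F) {γ D : ℝ}
    (hγ : 0 < γ) (hD : 0 ≤ D)
    (hb : ∀ t : Fin N → ℝ, (∀ i, 0 < t i) → |F t| ≤ D * ∏ i, Real.exp (-(γ * t i))) :
    IntegrableOn F (Set.univ.pi fun _ : Fin N => Set.Ioi (0:ℝ)) ∧
    |∫ t in Set.univ.pi fun _ : Fin N => Set.Ioi (0:ℝ), F t| ≤ D * (γ⁻¹) ^ N := by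
  set S := Set.univ.pi fun _ : Fin N => Set.Ioi (0:ℝ) with hS
  have hSm : MeasurableSet S := MeasurableSet.univ_pi fun _ => measurableSet_Ioi
  set h : ℝ → ℝ := Set.indicator (Set.Ioi 0) (fun x => Real.exp (-(γ * x))) with hdef
  have hh : Integrable h := by
    rw [hdef, integrable_indicator_iff measurableSet_Ioi]
    have := exp_neg_integrableOn_Ioi 0 hγ
    simpa [neg_mul] using this
  have hhnn : ∀ x, 0 ≤ h x :=
    fun x => Set.indicator_nonneg (fun y _ => (Real.exp_pos _).le) x
  have hH : Integrable fun t : Fin N → ℝ => D * ∏ i, h (t i) :=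
    (Integrable.fintype_prod fun _ => hh).const_mul D
  have hbd : ∀ t ∈ S, |F t| ≤ D * ∏ i, h (t i) := by
    intro t ht
    rw [hS, Set.mem_univ_pi] at ht
    have heq : ∀ i : Fin N, h (t i) = Real.exp (-(γ * t i)) :=
      fun i => Set.indicator_of_mem (ht i) _
    rw [Finset.prod_congr rfl fun i _ => heq i]
    exact hb t ht
  have hHnn : ∀ t : Fin N → ℝ, 0 ≤ D * ∏ i, h (t i) :=
    fun t => mul_nonneg hD (Finset.prod_nonneg fun i _ => hhnn _)
  have hint : IntegrableOn F S := by
    refine Integrable.mono' hH.integrableOn hF.aestronglyMeasurable.restrict ?_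
    refine (ae_restrict_iff' hSm).2 (ae_of_all _ fun t ht => ?_)
    simpa [Real.norm_eq_abs] using hbd t ht
  refine ⟨hint, ?_⟩
  have hIval : ∫ x, h x = γ⁻¹ := by
    rw [hdef, MeasureTheory.integral_indicator measurableSet_Ioi]
    have := integral_comp_mul_left_Ioi (fun y => Real.exp (-y)) 0 hγ
    rw [mul_zero] at this
    rw [this, integral_exp_neg_Ioi]
    simp
  calc |∫ t in S, F t| ≤ ∫ t in S, |F t| := by
        simpa [Real.norm_eq_abs] using norm_integral_le_integral_norm (μ := volume.restrict S) F
    _ ≤ ∫ t in S, D * ∏ i, h (t i) :=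
        setIntegral_mono_on hint.abs hH.integrableOn hSm hbd
    _ ≤ ∫ (t : Fin N → ℝ), D * ∏ i, h (t i) :=
        setIntegral_le_integral hH (ae_of_all _ fun t => hHnn t)
    _ = D * ∫ (t : Fin N → ℝ), ∏ i, h (t i) := integral_const_mul D _
    _ = D * (∫ x, h x) ^ N := by
        rw [MeasureTheory.integral_fintype_prod_volume_eq_pow h, Fintype.card_fin]
    _ = D * (γ⁻¹) ^ N := by rw [hIval]

lemma matrix_summable {r c : ℕ} (f : ℕ → Matrix (Fin r) (Fin c) ℝ)
    (hf : ∀ i j, Summable fun k => f k i j) : Summable f := by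
  have : Summable fun k => (f k : Fin r → Fin c → ℝ) :=
    Pi.summable.2 fun i => Pi.summable.2 fun j => hf i j
  exact this

lemma geom_summable (c0 β κ bb ι : ℝ) (hβ : 0 ≤ β) (hκ : 0 ≤ κ) (hι : 0 ≤ ι)
    (hlt : β ^ 2 * κ ^ 2 * ι < 1) :
    Summable fun k : ℕ => (c0 * (β ^ (k + 1) * κ ^ k * bb) ^ 2) * ι ^ (k + 1) := by
  have h0 : 0 ≤ β ^ 2 * κ ^ 2 * ι := by positivity
  refine ((summable_geometric_of_lt_one h0 hlt).mul_left
    (c0 * bb ^ 2 * β ^ 2 * ι)).congr fun k => ?_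
  ring


lemma enorm_sq_eq_dot {a : Type*} [Fintype a] (x : a → ℝ) :
    enorm x ^ 2 = x ⬝ᵥ x := by
  rw [enorm_eq, Real.sq_sqrt (Finset.sum_nonneg fun i _ => sq_nonneg _)]
  simp [dotProduct, sq]

lemma dot_abs_le {a : Type*} [Fintype a] (x y : a → ℝ) :
    |x ⬝ᵥ y| ≤ enorm x * enorm y := by
  have h := abs_real_inner_le_norm ((WithLp.equiv 2 (a → ℝ)).symm x)
    ((WithLp.equiv 2 (a → ℝ)).symm y)
  simpa [enorm, PiLp.inner_apply, RCLike.inner_apply, dotProduct, mul_comm] using h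

lemma opNorm_transpose_le {a b : Type*} [Fintype a] [Fintype b] [DecidableEq a] [DecidableEq b]
    (M : Matrix a b ℝ) : opNorm Mᵀ ≤ opNorm M := by
  refine opNorm_le_of_bound _ (opNorm_nonneg M) fun x => ?_
  rcases eq_or_lt_of_le (enorm_nonneg (Mᵀ *ᵥ x)) with h | h
  · rw [← h]
    exact mul_nonneg (opNorm_nonneg M) (enorm_nonneg x)
  · have h1 : (Mᵀ *ᵥ x) ⬝ᵥ (Mᵀ *ᵥ x) = x ⬝ᵥ (M *ᵥ (Mᵀ *ᵥ x)) := by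
      rw [dotProduct_mulVec x M (Mᵀ *ᵥ x), Matrix.mulVec_transpose]
    have h2 : enorm (Mᵀ *ᵥ x) ^ 2 ≤ opNorm M * enorm x * enorm (Mᵀ *ᵥ x) := by
      rw [enorm_sq_eq_dot, h1]
      calc x ⬝ᵥ (M *ᵥ (Mᵀ *ᵥ x)) ≤ |x ⬝ᵥ (M *ᵥ (Mᵀ *ᵥ x))| := le_abs_self _
        _ ≤ enorm x * enorm (M *ᵥ (Mᵀ *ᵥ x)) := dot_abs_le _ _
        _ ≤ enorm x * (opNorm M * enorm (Mᵀ *ᵥ x)) :=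
            mul_le_mul_of_nonneg_left (mulVec_enorm_le M _) (enorm_nonneg x)
        _ = opNorm M * enorm x * enorm (Mᵀ *ᵥ x) := by ring
    have h3 : enorm (Mᵀ *ᵥ x) * enorm (Mᵀ *ᵥ x) ≤ (opNorm M * enorm x) * enorm (Mᵀ *ᵥ x) := by
      rw [← sq]; exact h2
    exact le_of_mul_le_mul_right h3 h

lemma exp_smul_transpose {n : Type*} [Fintype n] [DecidableEq n] (A : Matrix n n ℝ) (s : ℝ) :
    NormedSpace.exp (s • Aᵀ) = (NormedSpace.exp (s • A))ᵀ := by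
  rw [← Matrix.transpose_smul, Matrix.exp_transpose]

section Main

variable {n1 n2 m p : ℕ}

lemma reach_cont (A1 : Matrix (Fin n1) (Fin n1) ℝ) (A2 : Matrix (Fin n2) (Fin n2) ℝ)
    (B1 : Matrix (Fin n1) (Fin m) ℝ) (B2 : Matrix (Fin n2) (Fin m) ℝ)
    (K1 : Matrix (Fin n2) (Fin n1) ℝ) (K2 : Matrix (Fin n1) (Fin n2) ℝ) :
    ∀ k, Continuous (reachFun A1 A2 B1 B2 K1 K2 k).1 ∧
      Continuous (reachFun A1 A2 B1 B2 K1 K2 k).2 := by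
  intro k
  induction k with
  | zero =>
    exact ⟨((continuous_exp_smul A1).comp (continuous_apply 0)).matrix_mul continuous_const,
      ((continuous_exp_smul A2).comp (continuous_apply 0)).matrix_mul continuous_const⟩
  | succ k ih =>
    have hsucc : Continuous fun (t : Fin (k+2) → ℝ) (i : Fin (k+1)) => t i.succ :=
      continuous_pi fun i => continuous_apply i.succ
    exact ⟨((((continuous_exp_smul A1).comp (continuous_apply 0)).matrix_mul
        continuous_const).matrix_mul (ih.2.comp hsucc)),
      ((((continuous_exp_smul A2).comp (continuous_apply 0)).matrix_mul
        continuous_const).matrix_mul (ih.1.comp hsucc))⟩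

lemma reach_bound (A1 : Matrix (Fin n1) (Fin n1) ℝ) (A2 : Matrix (Fin n2) (Fin n2) ℝ)
    (B1 : Matrix (Fin n1) (Fin m) ℝ) (B2 : Matrix (Fin n2) (Fin m) ℝ)
    (K1 : Matrix (Fin n2) (Fin n1) ℝ) (K2 : Matrix (Fin n1) (Fin n2) ℝ)
    (α β κ bb : ℝ) (hβ : 0 ≤ β) (hκ : 0 ≤ κ) (hbb : 0 ≤ bb)
    (hA1 : ∀ s : ℝ, 0 ≤ s → opNorm (NormedSpace.exp (s • A1)) ≤ β * Real.exp (-α * s))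
    (hA2 : ∀ s : ℝ, 0 ≤ s → opNorm (NormedSpace.exp (s • A2)) ≤ β * Real.exp (-α * s))
    (hK1 : opNorm K1 ≤ κ) (hK2 : opNorm K2 ≤ κ)
    (hB1 : opNorm B1 ≤ bb) (hB2 : opNorm B2 ≤ bb) :
    ∀ k, ∀ t : Fin (k+1) → ℝ, (∀ i, 0 < t i) →
      opNorm ((reachFun A1 A2 B1 B2 K1 K2 k).1 t)
          ≤ β ^ (k+1) * κ ^ k * bb * Real.exp (-α * ∑ i, t i) ∧
      opNorm ((reachFun A1 A2 B1 B2 K1 K2 k).2 t)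
          ≤ β ^ (k+1) * κ ^ k * bb * Real.exp (-α * ∑ i, t i) := by
  intro k
  induction k with
  | zero =>
    intro t ht
    have h0 : (0:ℝ) ≤ t 0 := (ht 0).le
    have hsum : (∑ i : Fin 1, t i) = t 0 := Fin.sum_univ_one t
    constructor
    · have e1 : (reachFun A1 A2 B1 B2 K1 K2 0).1 t = NormedSpace.exp (t 0 • A1) * B1 := rfl
      rw [e1]
      calc opNorm (NormedSpace.exp (t 0 • A1) * B1)
          ≤ opNorm (NormedSpace.exp (t 0 • A1)) * opNorm B1 := opNorm_mul_le _ _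
        _ ≤ (β * Real.exp (-α * t 0)) * bb :=
            mul_le_mul (hA1 _ h0) hB1 (opNorm_nonneg _) (by positivity)
        _ = β ^ (0+1) * κ ^ 0 * bb * Real.exp (-α * ∑ i : Fin 1, t i) := by rw [hsum]; ring
    · have e1 : (reachFun A1 A2 B1 B2 K1 K2 0).2 t = NormedSpace.exp (t 0 • A2) * B2 := rfl
      rw [e1]
      calc opNorm (NormedSpace.exp (t 0 • A2) * B2)
          ≤ opNorm (NormedSpace.exp (t 0 • A2)) * opNorm B2 := opNorm_mul_le _ _
        _ ≤ (β * Real.exp (-α * t 0)) * bb :=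
            mul_le_mul (hA2 _ h0) hB2 (opNorm_nonneg _) (by positivity)
        _ = β ^ (0+1) * κ ^ 0 * bb * Real.exp (-α * ∑ i : Fin 1, t i) := by rw [hsum]; ring
  | succ k ih =>
    intro t ht
    obtain ⟨ih1, ih2⟩ := ih (fun i => t i.succ) (fun i => ht i.succ)
    have hsum : (∑ i : Fin (k+2), t i) = t 0 + ∑ i : Fin (k+1), t i.succ := Fin.sum_univ_succ t
    have hexp : Real.exp (-α * ∑ i : Fin (k+2), t i)
        = Real.exp (-α * t 0) * Real.exp (-α * ∑ i : Fin (k+1), t i.succ) := by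
      rw [hsum, ← Real.exp_add]
      congr 1
      ring
    constructor
    · have e1 : (reachFun A1 A2 B1 B2 K1 K2 (k+1)).1 t
          = NormedSpace.exp (t 0 • A1) * K2 *
            ((reachFun A1 A2 B1 B2 K1 K2 k).2 fun i => t i.succ) := rfl
      rw [e1]
      calc opNorm (NormedSpace.exp (t 0 • A1) * K2 *
              ((reachFun A1 A2 B1 B2 K1 K2 k).2 fun i => t i.succ))
          ≤ opNorm (NormedSpace.exp (t 0 • A1) * K2) *
              opNorm ((reachFun A1 A2 B1 B2 K1 K2 k).2 fun i => t i.succ) := opNorm_mul_le _ _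
        _ ≤ (opNorm (NormedSpace.exp (t 0 • A1)) * opNorm K2) *
              opNorm ((reachFun A1 A2 B1 B2 K1 K2 k).2 fun i => t i.succ) :=
            mul_le_mul_of_nonneg_right (opNorm_mul_le _ _) (opNorm_nonneg _)
        _ ≤ ((β * Real.exp (-α * t 0)) * κ) *
              (β ^ (k+1) * κ ^ k * bb * Real.exp (-α * ∑ i : Fin (k+1), t i.succ)) :=
            mul_le_mul (mul_le_mul (hA1 _ (ht 0).le) hK2 (opNorm_nonneg _) (by positivity))
              ih2 (opNorm_nonneg _) (by positivity)
        _ = β ^ (k+1+1) * κ ^ (k+1) * bb * Real.exp (-α * ∑ i : Fin (k+2), t i) := by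
            rw [hexp]; ring
    · have e1 : (reachFun A1 A2 B1 B2 K1 K2 (k+1)).2 t
          = NormedSpace.exp (t 0 • A2) * K1 *
            ((reachFun A1 A2 B1 B2 K1 K2 k).1 fun i => t i.succ) := rfl
      rw [e1]
      calc opNorm (NormedSpace.exp (t 0 • A2) * K1 *
              ((reachFun A1 A2 B1 B2 K1 K2 k).1 fun i => t i.succ))
          ≤ opNorm (NormedSpace.exp (t 0 • A2) * K1) *
              opNorm ((reachFun A1 A2 B1 B2 K1 K2 k).1 fun i => t i.succ) := opNorm_mul_le _ _
        _ ≤ (opNorm (NormedSpace.exp (t 0 • A2)) * opNorm K1) *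
              opNorm ((reachFun A1 A2 B1 B2 K1 K2 k).1 fun i => t i.succ) :=
            mul_le_mul_of_nonneg_right (opNorm_mul_le _ _) (opNorm_nonneg _)
        _ ≤ ((β * Real.exp (-α * t 0)) * κ) *
              (β ^ (k+1) * κ ^ k * bb * Real.exp (-α * ∑ i : Fin (k+1), t i.succ)) :=
            mul_le_mul (mul_le_mul (hA2 _ (ht 0).le) hK1 (opNorm_nonneg _) (by positivity))
              ih1 (opNorm_nonneg _) (by positivity)
        _ = β ^ (k+1+1) * κ ^ (k+1) * bb * Real.exp (-α * ∑ i : Fin (k+2), t i) := by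
            rw [hexp]; ring

lemma obs_eq_reach (A1 : Matrix (Fin n1) (Fin n1) ℝ) (A2 : Matrix (Fin n2) (Fin n2) ℝ)
    (C1 : Matrix (Fin p) (Fin n1) ℝ) (C2 : Matrix (Fin p) (Fin n2) ℝ)
    (K1 : Matrix (Fin n2) (Fin n1) ℝ) (K2 : Matrix (Fin n1) (Fin n2) ℝ) :
    ∀ k, (∀ t, (obsFun A1 A2 C1 C2 K1 K2 k).1 t
          = ((reachFun A1ᵀ A2ᵀ C1ᵀ C2ᵀ K2ᵀ K1ᵀ k).1 t)ᵀ) ∧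
      (∀ t, (obsFun A1 A2 C1 C2 K1 K2 k).2 t
          = ((reachFun A1ᵀ A2ᵀ C1ᵀ C2ᵀ K2ᵀ K1ᵀ k).2 t)ᵀ) := by
  intro k
  induction k with
  | zero =>
    constructor <;> intro t
    · show C1 * NormedSpace.exp (t 0 • A1) = (NormedSpace.exp (t 0 • A1ᵀ) * C1ᵀ)ᵀ
      rw [Matrix.transpose_mul, Matrix.transpose_transpose, exp_smul_transpose,
        Matrix.transpose_transpose]
    · show C2 * NormedSpace.exp (t 0 • A2) = (NormedSpace.exp (t 0 • A2ᵀ) * C2ᵀ)ᵀ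
      rw [Matrix.transpose_mul, Matrix.transpose_transpose, exp_smul_transpose,
        Matrix.transpose_transpose]
  | succ k ih =>
    constructor <;> intro t
    · show (obsFun A1 A2 C1 C2 K1 K2 k).2 (fun i => t i.succ) * K1 *
          NormedSpace.exp (t 0 • A1)
        = (NormedSpace.exp (t 0 • A1ᵀ) * K1ᵀ *
            ((reachFun A1ᵀ A2ᵀ C1ᵀ C2ᵀ K2ᵀ K1ᵀ k).2 fun i => t i.succ))ᵀ
      rw [ih.2, Matrix.transpose_mul, Matrix.transpose_mul, Matrix.transpose_transpose,
        exp_smul_transpose, Matrix.transpose_transpose, Matrix.mul_assoc]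
    · show (obsFun A1 A2 C1 C2 K1 K2 k).1 (fun i => t i.succ) * K2 *
          NormedSpace.exp (t 0 • A2)
        = (NormedSpace.exp (t 0 • A2ᵀ) * K2ᵀ *
            ((reachFun A1ᵀ A2ᵀ C1ᵀ C2ᵀ K2ᵀ K1ᵀ k).1 fun i => t i.succ))ᵀ
      rw [ih.1, Matrix.transpose_mul, Matrix.transpose_mul, Matrix.transpose_transpose,
        exp_smul_transpose, Matrix.transpose_transpose, Matrix.mul_assoc]

open MeasureTheory in
lemma level_package {r c N : ℕ} (g : (Fin (N+1) → ℝ) → Matrix (Fin r) (Fin c) ℝ)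
    (hg : Continuous g) {Ck α : ℝ} (hα : 0 < α) (hCk : 0 ≤ Ck)
    (hbd : ∀ t : Fin (N+1) → ℝ, (∀ i, 0 < t i) →
      opNorm (g t) ≤ Ck * Real.exp (-α * ∑ i, t i)) :
    (∀ i j, IntegrableOn (fun t => (g t * (g t)ᵀ) i j)
        (Set.univ.pi fun _ : Fin (N+1) => Set.Ioi (0:ℝ))) ∧
    (∀ i j, |∫ t in Set.univ.pi fun _ : Fin (N+1) => Set.Ioi (0:ℝ), (g t * (g t)ᵀ) i j|
        ≤ ((c:ℝ) * Ck ^ 2) * ((2*α)⁻¹) ^ (N+1)) := by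
  have main : ∀ i j, IntegrableOn (fun t => (g t * (g t)ᵀ) i j)
        (Set.univ.pi fun _ : Fin (N+1) => Set.Ioi (0:ℝ)) ∧
      |∫ t in Set.univ.pi fun _ : Fin (N+1) => Set.Ioi (0:ℝ), (g t * (g t)ᵀ) i j|
        ≤ ((c:ℝ) * Ck ^ 2) * ((2*α)⁻¹) ^ (N+1) := by
    intro i j
    refine scalar_int (fun t => (g t * (g t)ᵀ) i j)
      ((hg.matrix_mul hg.matrix_transpose).matrix_elem i j)
      (γ := 2*α) (D := (c:ℝ) * Ck ^ 2) (by positivity) (by positivity) ?_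
    intro t ht
    have h1 := entry_bound_right (g t) (hbd t ht) i j
    refine h1.trans (le_of_eq ?_)
    have h2 : Real.exp (-α * ∑ i, t i) ^ 2 = ∏ i, Real.exp (-(2*α * t i)) := by
      rw [sq, ← Real.exp_add, ← Real.exp_sum]
      congr 1
      have : (∑ i, -(2*α * t i)) = (-(2*α)) * ∑ i, t i := by
        rw [Finset.mul_sum]
        exact Finset.sum_congr rfl fun i _ => by ring
      rw [this]
      ring
    rw [Fintype.card_fin, mul_pow, h2]
    ring
  exact ⟨fun i j => (main i j).1, fun i j => (main i j).2⟩

end Main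

end Aux

/-- if `‖e^{A_D t}‖ ≤ β e^{−αt}` for the block-diagonal matrix
`A_D = blockdiag(A₁,A₂)` and `max(‖K₁‖,‖K₂‖) < √(2α)/β`, then for each mode the series of
level-`k` reachability Gramians and of level-`k` observability Gramians converge (all the
defining iterated integrals converge entrywise and the resulting series of matrices are
summable), i.e. the infinite reachability and observability Gramians of both modes exist. -/
theorem stmt_4 {n1 n2 m p : ℕ}
    (A1 : Matrix (Fin n1) (Fin n1) ℝ) (A2 : Matrix (Fin n2) (Fin n2) ℝ)
    (B1 : Matrix (Fin n1) (Fin m) ℝ) (B2 : Matrix (Fin n2) (Fin m) ℝ)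
    (C1 : Matrix (Fin p) (Fin n1) ℝ) (C2 : Matrix (Fin p) (Fin n2) ℝ)
    (K1 : Matrix (Fin n2) (Fin n1) ℝ) (K2 : Matrix (Fin n1) (Fin n2) ℝ)
    (α β : ℝ) (hα : 0 < α) (hβ : 0 < β)
    (hAD : ∀ t : ℝ, 0 ≤ t →
      opNorm (NormedSpace.exp (t • (Matrix.fromBlocks A1 0 0 A2))) ≤ β * Real.exp (-α * t))
    (hK : max (opNorm K1) (opNorm K2) < Real.sqrt (2 * α) / β) :
    (∀ k : ℕ, ∀ i j,
        IntegrableOn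
          (fun t => ((reachFun A1 A2 B1 B2 K1 K2 k).1 t *
              ((reachFun A1 A2 B1 B2 K1 K2 k).1 t)ᵀ) i j)
          (Set.univ.pi (fun _ : Fin (k + 1) => Set.Ioi (0:ℝ)))) ∧
    (∀ k : ℕ, ∀ i j,
        IntegrableOn
          (fun t => ((reachFun A1 A2 B1 B2 K1 K2 k).2 t *
              ((reachFun A1 A2 B1 B2 K1 K2 k).2 t)ᵀ) i j)
          (Set.univ.pi (fun _ : Fin (k + 1) => Set.Ioi (0:ℝ)))) ∧
    (∀ k : ℕ, ∀ i j,
        IntegrableOn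
          (fun t => (((obsFun A1 A2 C1 C2 K1 K2 k).1 t)ᵀ *
              (obsFun A1 A2 C1 C2 K1 K2 k).1 t) i j)
          (Set.univ.pi (fun _ : Fin (k + 1) => Set.Ioi (0:ℝ)))) ∧
    (∀ k : ℕ, ∀ i j,
        IntegrableOn
          (fun t => (((obsFun A1 A2 C1 C2 K1 K2 k).2 t)ᵀ *
              (obsFun A1 A2 C1 C2 K1 K2 k).2 t) i j)
          (Set.univ.pi (fun _ : Fin (k + 1) => Set.Ioi (0:ℝ)))) ∧
    Summable (fun k => reachGram1 A1 A2 B1 B2 K1 K2 k) ∧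
    Summable (fun k => reachGram2 A1 A2 B1 B2 K1 K2 k) ∧
    Summable (fun k => obsGram1 A1 A2 C1 C2 K1 K2 k) ∧
    Summable (fun k => obsGram2 A1 A2 C1 C2 K1 K2 k) := by
  classical
  have hκ0 : 0 ≤ max (opNorm K1) (opNorm K2) :=
    le_trans (Aux.opNorm_nonneg K1) (le_max_left _ _)
  have hβ0 : (0:ℝ) ≤ β := hβ.le
  have hfb : ∀ s : ℝ, NormedSpace.exp (s • Matrix.fromBlocks A1 0 0 A2)
      = Matrix.fromBlocks (NormedSpace.exp (s • A1)) 0 0 (NormedSpace.exp (s • A2)) := by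
    intro s
    have h : s • Matrix.fromBlocks A1 0 0 A2
        = Matrix.fromBlocks (s • A1) 0 0 (s • A2) := by
      rw [Matrix.fromBlocks_smul]
      simp only [smul_zero]
    rw [h, Aux.exp_fromBlocks]
  have hA1 : ∀ s : ℝ, 0 ≤ s → opNorm (NormedSpace.exp (s • A1)) ≤ β * Real.exp (-α * s) := by
    intro s hs
    refine le_trans ?_ (hAD s hs)
    rw [hfb s]
    exact Aux.opNorm_fromBlocks_left _ _ _ _
  have hA2 : ∀ s : ℝ, 0 ≤ s → opNorm (NormedSpace.exp (s • A2)) ≤ β * Real.exp (-α * s) := by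
    intro s hs
    refine le_trans ?_ (hAD s hs)
    rw [hfb s]
    exact Aux.opNorm_fromBlocks_right _ _ _ _
  have hA1t : ∀ s : ℝ, 0 ≤ s → opNorm (NormedSpace.exp (s • A1ᵀ)) ≤ β * Real.exp (-α * s) := by
    intro s hs
    rw [Aux.exp_smul_transpose]
    exact le_trans (Aux.opNorm_transpose_le _) (hA1 s hs)
  have hA2t : ∀ s : ℝ, 0 ≤ s → opNorm (NormedSpace.exp (s • A2ᵀ)) ≤ β * Real.exp (-α * s) := by
    intro s hs
    rw [Aux.exp_smul_transpose]
    exact le_trans (Aux.opNorm_transpose_le _) (hA2 s hs)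
  have hbb0 : 0 ≤ max (opNorm B1) (opNorm B2) :=
    le_trans (Aux.opNorm_nonneg B1) (le_max_left _ _)
  have hcc0 : 0 ≤ max (opNorm C1ᵀ) (opNorm C2ᵀ) :=
    le_trans (Aux.opNorm_nonneg C1ᵀ) (le_max_left _ _)
  have h2α : (0:ℝ) < 2 * α := by positivity
  have hκβ : max (opNorm K1) (opNorm K2) * β < Real.sqrt (2*α) := (lt_div_iff₀ hβ).1 hK
  have hratio : β ^ 2 * (max (opNorm K1) (opNorm K2)) ^ 2 * (2*α)⁻¹ < 1 := by
    have h1 : (max (opNorm K1) (opNorm K2) * β) * (max (opNorm K1) (opNorm K2) * β)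
        < Real.sqrt (2*α) * Real.sqrt (2*α) :=
      mul_self_lt_mul_self (by positivity) hκβ
    rw [Real.mul_self_sqrt h2α.le] at h1
    rw [← div_eq_mul_inv, div_lt_one h2α]
    nlinarith [h1]
  have RB := Aux.reach_bound A1 A2 B1 B2 K1 K2 α β (max (opNorm K1) (opNorm K2))
    (max (opNorm B1) (opNorm B2)) hβ0 hκ0 hbb0 hA1 hA2
    (le_max_left _ _) (le_max_right _ _) (le_max_left _ _) (le_max_right _ _)
  have RBt := Aux.reach_bound A1ᵀ A2ᵀ C1ᵀ C2ᵀ K2ᵀ K1ᵀ α β (max (opNorm K1) (opNorm K2))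
    (max (opNorm C1ᵀ) (opNorm C2ᵀ)) hβ0 hκ0 hcc0 hA1t hA2t
    (le_trans (Aux.opNorm_transpose_le K2) (le_max_right _ _))
    (le_trans (Aux.opNorm_transpose_le K1) (le_max_left _ _))
    (le_max_left _ _) (le_max_right _ _)
  have RC := Aux.reach_cont A1 A2 B1 B2 K1 K2
  have RCt := Aux.reach_cont A1ᵀ A2ᵀ C1ᵀ C2ᵀ K2ᵀ K1ᵀ
  have OE := Aux.obs_eq_reach A1 A2 C1 C2 K1 K2
  have hCk : ∀ k : ℕ, (0:ℝ) ≤ β ^ (k+1) * (max (opNorm K1) (opNorm K2)) ^ k *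
      (max (opNorm B1) (opNorm B2)) :=
    fun k => mul_nonneg (mul_nonneg (pow_nonneg hβ0 _) (pow_nonneg hκ0 _)) hbb0
  have hCkc : ∀ k : ℕ, (0:ℝ) ≤ β ^ (k+1) * (max (opNorm K1) (opNorm K2)) ^ k *
      (max (opNorm C1ᵀ) (opNorm C2ᵀ)) :=
    fun k => mul_nonneg (mul_nonneg (pow_nonneg hβ0 _) (pow_nonneg hκ0 _)) hcc0
  have P1 := fun k : ℕ => Aux.level_package (reachFun A1 A2 B1 B2 K1 K2 k).1 (RC k).1
    hα (hCk k) (fun t ht => (RB k t ht).1)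
  have P2 := fun k : ℕ => Aux.level_package (reachFun A1 A2 B1 B2 K1 K2 k).2 (RC k).2
    hα (hCk k) (fun t ht => (RB k t ht).2)
  have Pt1 := fun k : ℕ => Aux.level_package (reachFun A1ᵀ A2ᵀ C1ᵀ C2ᵀ K2ᵀ K1ᵀ k).1 (RCt k).1
    hα (hCkc k) (fun t ht => (RBt k t ht).1)
  have Pt2 := fun k : ℕ => Aux.level_package (reachFun A1ᵀ A2ᵀ C1ᵀ C2ᵀ K2ᵀ K1ᵀ k).2 (RCt k).2
    hα (hCkc k) (fun t ht => (RBt k t ht).2)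
  have hfe1 : ∀ k (i j : Fin n1), (fun t : Fin (k+1) → ℝ =>
        (((obsFun A1 A2 C1 C2 K1 K2 k).1 t)ᵀ * (obsFun A1 A2 C1 C2 K1 K2 k).1 t) i j)
      = fun t => ((reachFun A1ᵀ A2ᵀ C1ᵀ C2ᵀ K2ᵀ K1ᵀ k).1 t *
        ((reachFun A1ᵀ A2ᵀ C1ᵀ C2ᵀ K2ᵀ K1ᵀ k).1 t)ᵀ) i j := by
    intro k i j
    funext t
    rw [(OE k).1 t, Matrix.transpose_transpose]
  have hfe2 : ∀ k (i j : Fin n2), (fun t : Fin (k+1) → ℝ =>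
        (((obsFun A1 A2 C1 C2 K1 K2 k).2 t)ᵀ * (obsFun A1 A2 C1 C2 K1 K2 k).2 t) i j)
      = fun t => ((reachFun A1ᵀ A2ᵀ C1ᵀ C2ᵀ K2ᵀ K1ᵀ k).2 t *
        ((reachFun A1ᵀ A2ᵀ C1ᵀ C2ᵀ K2ᵀ K1ᵀ k).2 t)ᵀ) i j := by
    intro k i j
    funext t
    rw [(OE k).2 t, Matrix.transpose_transpose]
  have hsumB : Summable fun k : ℕ => ((m:ℝ) * (β ^ (k+1) *
      (max (opNorm K1) (opNorm K2)) ^ k * (max (opNorm B1) (opNorm B2))) ^ 2) * ((2*α)⁻¹) ^ (k+1) :=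
    Aux.geom_summable _ _ _ _ _ hβ0 hκ0 (by positivity) hratio
  have hsumC : Summable fun k : ℕ => ((p:ℝ) * (β ^ (k+1) *
      (max (opNorm K1) (opNorm K2)) ^ k * (max (opNorm C1ᵀ) (opNorm C2ᵀ))) ^ 2) * ((2*α)⁻¹) ^ (k+1) :=
    Aux.geom_summable _ _ _ _ _ hβ0 hκ0 (by positivity) hratio
  refine ⟨fun k i j => (P1 k).1 i j, fun k i j => (P2 k).1 i j, ?_, ?_, ?_, ?_, ?_, ?_⟩
  · intro k i j
    rw [show (fun t : Fin (k+1) → ℝ =>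
        (((obsFun A1 A2 C1 C2 K1 K2 k).1 t)ᵀ * (obsFun A1 A2 C1 C2 K1 K2 k).1 t) i j)
      = _ from hfe1 k i j]
    exact (Pt1 k).1 i j
  · intro k i j
    rw [show (fun t : Fin (k+1) → ℝ =>
        (((obsFun A1 A2 C1 C2 K1 K2 k).2 t)ᵀ * (obsFun A1 A2 C1 C2 K1 K2 k).2 t) i j)
      = _ from hfe2 k i j]
    exact (Pt2 k).1 i j
  · refine Aux.matrix_summable _ fun i j => ?_
    refine Summable.of_norm_bounded hsumB fun k => ?_
    have hb := (P1 k).2 i j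
    simpa [reachGram1, Real.norm_eq_abs] using hb
  · refine Aux.matrix_summable _ fun i j => ?_
    refine Summable.of_norm_bounded hsumB fun k => ?_
    have hb := (P2 k).2 i j
    simpa [reachGram2, Real.norm_eq_abs] using hb
  · refine Aux.matrix_summable _ fun i j => ?_
    refine Summable.of_norm_bounded hsumC fun k => ?_
    have hb := (Pt1 k).2 i j
    have heq : obsGram1 A1 A2 C1 C2 K1 K2 k i j
        = ∫ t in Set.univ.pi fun _ : Fin (k+1) => Set.Ioi (0:ℝ),
            ((reachFun A1ᵀ A2ᵀ C1ᵀ C2ᵀ K2ᵀ K1ᵀ k).1 t *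
              ((reachFun A1ᵀ A2ᵀ C1ᵀ C2ᵀ K2ᵀ K1ᵀ k).1 t)ᵀ) i j := by
      simp only [obsGram1, Matrix.of_apply]
      exact congrArg _ (hfe1 k i j)
    rw [Real.norm_eq_abs, heq]
    exact hb
  · refine Aux.matrix_summable _ fun i j => ?_
    refine Summable.of_norm_bounded hsumC fun k => ?_
    have hb := (Pt2 k).2 i j
    have heq : obsGram2 A1 A2 C1 C2 K1 K2 k i j
        = ∫ t in Set.univ.pi fun _ : Fin (k+1) => Set.Ioi (0:ℝ),
            ((reachFun A1ᵀ A2ᵀ C1ᵀ C2ᵀ K2ᵀ K1ᵀ k).2 t *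
              ((reachFun A1ᵀ A2ᵀ C1ᵀ C2ᵀ K2ᵀ K1ᵀ k).2 t)ᵀ) i j := by
      simp only [obsGram2, Matrix.of_apply]
      exact congrArg _ (hfe2 k i j)
    rw [Real.norm_eq_abs, heq]
    exact hb
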